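/- Let n be a natural number and let ε be a function assigning an element of ZMod 2 to each edge of the graph 𝒢ₙ. Assume that every triangle Q₁, Q₂, Q₃ of 𝒢ₙ with |Q₁ ∩ Q₂ ∩ Q₃| = 4 satisfies ε({Q₁,Q₂}) + ε({Q₂,Q₃}) + ε({Q₁,Q₃}) = 0. If there is no map Φ from the 5-element subsets of Fin n to ZMod 2 such that Φ(Q) + Φ(Q') = ε({Q,Q'}) for every edge {Q,Q'} of 𝒢ₙ, then there exists a 6-element subset S of Fin n such that there is no map Φ from the 5-element subsets of S to ZMod 2 with Φ(Q) + Φ(Q') = ε({Q,Q'}) for every edge {Q,Q'} of 𝒢ₙ with Q ⊆ S and Q' ⊆ S. -/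

import Mathlib

/-- The graph `𝒢ₙ` whose vertices are the 5-element subsets of `Fin n`,
with `Q, Q'` adjacent iff `|Q ∩ Q'| = 4`. -/
def ATGraph (n : ℕ) : SimpleGraph {Q : Finset (Fin n) // Q.card = 5} where
  Adj Q Q' := (Q.1 ∩ Q'.1).card = 4
  symm := by
    constructor
    intro Q Q' h
    rwa [Finset.inter_comm]
  loopless := by
    constructor
    intro Q h
    rw [Finset.inter_self, Q.2] at h
    exact absurd h (by norm_num)

private lemma at_key (n : ℕ) (ε : Sym2 {Q : Finset (Fin n) // Q.card = 5} → ZMod 2)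
    (hA : ∀ Q₁ Q₂ Q₃ : {Q : Finset (Fin n) // Q.card = 5},
      (ATGraph n).Adj Q₁ Q₂ → (ATGraph n).Adj Q₂ Q₃ → (ATGraph n).Adj Q₁ Q₃ →
      ε s(Q₁, Q₂) + ε s(Q₂, Q₃) + ε s(Q₁, Q₃) = 0)
    (m : ℕ) :
    ∃ Φ : {Q : Finset (Fin n) // Q.card = 5} → ZMod 2,
      ∀ Q Q', (∀ i ∈ Q.1, i.val < m) → (∀ i ∈ Q'.1, i.val < m) →
        (ATGraph n).Adj Q Q' → Φ Q + Φ Q' = ε s(Q, Q') := by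
  classical
  have h2 : ∀ a : ZMod 2, a + a = 0 := by decide
  induction m with
  | zero =>
    refine ⟨0, fun Q Q' hQ _ _ => ?_⟩
    have hne : Q.1.Nonempty := Finset.card_pos.mp (by rw [Q.2]; norm_num)
    exact absurd (hQ _ hne.choose_spec) (by omega)
  | succ m ih =>
    obtain ⟨Φ, hΦ⟩ := ih
    by_cases hmn : m < n
    swap
    · refine ⟨Φ, fun Q Q' hQ hQ' hadj => hΦ Q Q'
        (fun i _ => lt_of_lt_of_le i.isLt (not_lt.mp hmn))
        (fun i _ => lt_of_lt_of_le i.isLt (not_lt.mp hmn)) hadj⟩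
    by_cases hm5 : 5 ≤ m
    swap
    · -- vacuous: any two 5-sets with values < m+1 ≤ 5 coincide
      refine ⟨Φ, fun Q Q' hQ hQ' hadj => absurd hadj ?_⟩
      have hFcard : (Finset.univ.filter (fun i : Fin n => i.val < m+1)).card ≤ m+1 := by
        have h1 : (Finset.univ.filter (fun i : Fin n => i.val < m+1)).card
            = ((Finset.univ.filter (fun i : Fin n => i.val < m+1)).image Fin.val).card :=
          (Finset.card_image_of_injective _ Fin.val_injective).symm
        have h2' : (Finset.univ.filter (fun i : Fin n => i.val < m+1)).image Fin.val
            ⊆ Finset.range (m+1) := by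
          intro k hk
          simp only [Finset.mem_image, Finset.mem_filter] at hk
          obtain ⟨i, ⟨_, hi⟩, rfl⟩ := hk
          simpa using hi
        have := Finset.card_le_card h2'
        rw [Finset.card_range] at this
        omega
      have heq : ∀ T : {Q : Finset (Fin n) // Q.card = 5}, (∀ i ∈ T.1, i.val < m+1) →
          T.1 = Finset.univ.filter (fun i : Fin n => i.val < m+1) := by
        intro T hT
        apply Finset.eq_of_subset_of_card_le
        · intro i hi
          simp only [Finset.mem_filter, Finset.mem_univ, true_and]
          exact hT i hi
        · rw [T.2]; omega
      have : Q = Q' := Subtype.ext ((heq Q hQ).trans (heq Q' hQ').symm)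
      rw [this]
      exact (ATGraph n).loopless.irrefl Q'
    -- main case: 5 ≤ m < n
    set e : Fin n := ⟨m, hmn⟩ with he
    have hfresh : ∀ R : Finset (Fin n), R.card = 4 → ∃ x : Fin n, x.val < m ∧ x ∉ R := by
      intro R hR
      have hsub : ¬ (Finset.univ.filter (fun i : Fin n => i.val < m)) ⊆ R := by
        intro hsub
        have hcard : (Finset.univ.filter (fun i : Fin n => i.val < m)).card ≤ 4 :=
          hR ▸ Finset.card_le_card hsub
        have himg : Finset.range m ⊆
            (Finset.univ.filter (fun i : Fin n => i.val < m)).image Fin.val := by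
          intro k hk
          simp only [Finset.mem_range] at hk
          refine Finset.mem_image.mpr ⟨⟨k, lt_trans hk hmn⟩, ?_, rfl⟩
          simp [hk]
        have h1 := Finset.card_le_card himg
        rw [Finset.card_range] at h1
        have h3 := Finset.card_image_le (s := Finset.univ.filter (fun i : Fin n => i.val < m))
          (f := Fin.val)
        omega
      obtain ⟨x, hx1, hx2⟩ := Finset.not_subset.mp hsub
      exact ⟨x, (Finset.mem_filter.mp hx1).2, hx2⟩
    have hex : ∀ Q : {Q : Finset (Fin n) // Q.card = 5}, e ∈ Q.1 →
        (∀ i ∈ Q.1, i.val < m+1) →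
        ∃ P : {Q : Finset (Fin n) // Q.card = 5},
          (∀ i ∈ P.1, i.val < m) ∧ Q.1.erase e ⊆ P.1 := by
      intro Q hQe hQm
      have hR4 : (Q.1.erase e).card = 4 := by rw [Finset.card_erase_of_mem hQe, Q.2]
      obtain ⟨x, hx1, hx2⟩ := hfresh _ hR4
      refine ⟨⟨insert x (Q.1.erase e),
        by rw [Finset.card_insert_of_notMem hx2, hR4]⟩, ?_, Finset.subset_insert _ _⟩
      intro i hi
      rcases Finset.mem_insert.mp hi with rfl | hi
      · exact hx1
      · have hiQ := Finset.mem_of_mem_erase hi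
        have hine := Finset.ne_of_mem_erase hi
        have h1 := hQm i hiQ
        have h2 : i.val ≠ m := fun hval => hine (Fin.ext hval)
        omega
    choose nb hnb1 hnb2 using hex
    have huniq : ∀ Q P P' : {Q : Finset (Fin n) // Q.card = 5}, e ∈ Q.1 →
        (∀ i ∈ P.1, i.val < m) → (∀ i ∈ P'.1, i.val < m) →
        Q.1.erase e ⊆ P.1 → Q.1.erase e ⊆ P'.1 →
        Φ P + ε s(P, Q) = Φ P' + ε s(P', Q) := by
      intro Q P P' hQe hPm hP'm hRP hRP'
      set R := Q.1.erase e with hRdef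
      have hR4 : R.card = 4 := by rw [hRdef, Finset.card_erase_of_mem hQe, Q.2]
      have heR : e ∉ R := Finset.notMem_erase _ _
      have hQR : Q.1 = insert e R := (Finset.insert_erase hQe).symm
      have hxP : ∀ T : {Q : Finset (Fin n) // Q.card = 5}, R ⊆ T.1 →
          ∃ x, x ∉ R ∧ T.1 = insert x R := by
        intro T hRT
        have hc1 : (T.1 \ R).card = 1 := by rw [Finset.card_sdiff_of_subset hRT, T.2, hR4]
        obtain ⟨x, hxx⟩ := Finset.card_eq_one.mp hc1
        have hx1 : x ∉ R := by
          have : x ∈ T.1 \ R := hxx ▸ Finset.mem_singleton_self x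
          exact (Finset.mem_sdiff.mp this).2
        refine ⟨x, hx1, ?_⟩
        have hu := Finset.sdiff_union_of_subset hRT
        rw [hxx, ← Finset.insert_eq] at hu
        exact hu.symm
      obtain ⟨x, hxR, hPx⟩ := hxP P hRP
      obtain ⟨y, hyR, hP'y⟩ := hxP P' hRP'
      have hxm : x.val < m := hPm x (by rw [hPx]; exact Finset.mem_insert_self _ _)
      have hym : y.val < m := hP'm y (by rw [hP'y]; exact Finset.mem_insert_self _ _)
      have hxe : x ≠ e := fun h => by rw [h] at hxm; simp [he] at hxm
      have hye : y ≠ e := fun h => by rw [h] at hym; simp [he] at hym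
      by_cases hxy : x = y
      · have : P = P' := Subtype.ext (by rw [hPx, hP'y, hxy])
        rw [this]
      have hint : ∀ a b : Fin n, a ≠ b → a ∉ R → b ∉ R →
          (insert a R) ∩ (insert b R) = R := by
        intro a b hab haR hbR
        ext z
        simp only [Finset.mem_inter, Finset.mem_insert]
        constructor
        · rintro ⟨h1, hbz⟩
          rcases h1 with rfl | h1
          · rcases hbz with h | h
            · exact absurd h hab
            · exact absurd h haR
          · exact h1
        · intro hz; exact ⟨Or.inr hz, Or.inr hz⟩
      have hadjPQ : (ATGraph n).Adj P Q := by
        show (P.1 ∩ Q.1).card = 4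
        rw [hPx, hQR, hint x e hxe hxR heR, hR4]
      have hadjP'Q : (ATGraph n).Adj P' Q := by
        show (P'.1 ∩ Q.1).card = 4
        rw [hP'y, hQR, hint y e hye hyR heR, hR4]
      have hadjPP' : (ATGraph n).Adj P P' := by
        show (P.1 ∩ P'.1).card = 4
        rw [hPx, hP'y, hint x y hxy hxR hyR, hR4]
      have hold := hΦ P P' hPm hP'm hadjPP'
      have htr := hA P P' Q hadjPP' hadjP'Q hadjPQ
      linear_combination hold + htr - h2 (Φ P' + ε s(P', Q))
    refine ⟨fun Q => if h : e ∈ Q.1 ∧ ∀ i ∈ Q.1, i.val < m+1 then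
        Φ (nb Q h.1 h.2) + ε s(nb Q h.1 h.2, Q) else Φ Q, ?_⟩
    intro Q Q' hQm hQ'm hadj
    beta_reduce
    have hcard4 : (Q.1 ∩ Q'.1).card = 4 := hadj
    have hlt : ∀ T : {Q : Finset (Fin n) // Q.card = 5}, (∀ i ∈ T.1, i.val < m+1) →
        e ∉ T.1 → ∀ i ∈ T.1, i.val < m := by
      intro T hT heT i hi
      have h1 := hT i hi
      have hne : i ≠ e := fun h => heT (h ▸ hi)
      have : i.val ≠ m := fun hv => hne (Fin.ext hv)
      omega
    by_cases hQe : e ∈ Q.1 <;> by_cases hQ'e : e ∈ Q'.1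
    · -- both contain e
      rw [dif_pos ⟨hQe, hQm⟩, dif_pos ⟨hQ'e, hQ'm⟩]
      have hu6 : (Q.1 ∪ Q'.1).card = 6 := by
        have := Finset.card_union_add_card_inter Q.1 Q'.1
        rw [Q.2, Q'.2, hcard4] at this; omega
      set P : {Q : Finset (Fin n) // Q.card = 5} := ⟨(Q.1 ∪ Q'.1).erase e,
        by rw [Finset.card_erase_of_mem (Finset.mem_union_left _ hQe), hu6]⟩ with hP
      have hPm : ∀ i ∈ P.1, i.val < m := by
        intro i hi
        have hiu := Finset.mem_of_mem_erase hi
        have hine := Finset.ne_of_mem_erase hi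
        have h1 : i.val < m+1 := by
          rcases Finset.mem_union.mp hiu with h | h
          exacts [hQm i h, hQ'm i h]
        have : i.val ≠ m := fun hv => hine (Fin.ext hv)
        omega
      have hsubQ : Q.1.erase e ⊆ P.1 := by
        intro z hz
        exact Finset.mem_erase.mpr ⟨(Finset.mem_erase.mp hz).1,
          Finset.mem_union_left _ (Finset.mem_erase.mp hz).2⟩
      have hsubQ' : Q'.1.erase e ⊆ P.1 := by
        intro z hz
        exact Finset.mem_erase.mpr ⟨(Finset.mem_erase.mp hz).1,
          Finset.mem_union_right _ (Finset.mem_erase.mp hz).2⟩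
      have hQeq := huniq Q (nb Q hQe hQm) P hQe (hnb1 _ _ _) hPm (hnb2 _ _ _) hsubQ
      have hQ'eq := huniq Q' (nb Q' hQ'e hQ'm) P hQ'e (hnb1 _ _ _) hPm (hnb2 _ _ _) hsubQ'
      rw [hQeq, hQ'eq]
      have hPQ : ∀ T : {Q : Finset (Fin n) // Q.card = 5}, e ∈ T.1 → T.1 ⊆ Q.1 ∪ Q'.1 →
          (ATGraph n).Adj P T := by
        intro T heT hTsub
        show (P.1 ∩ T.1).card = 4
        have : P.1 ∩ T.1 = T.1.erase e := by
          ext z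
          simp only [hP, Finset.mem_inter, Finset.mem_erase]
          constructor
          · rintro ⟨⟨hne, _⟩, hzT⟩; exact ⟨hne, hzT⟩
          · rintro ⟨hne, hzT⟩; exact ⟨⟨hne, hTsub hzT⟩, hzT⟩
        rw [this, Finset.card_erase_of_mem heT, T.2]
      have hadjPQ := hPQ Q hQe Finset.subset_union_left
      have hadjPQ' := hPQ Q' hQ'e Finset.subset_union_right
      have htr := hA P Q Q' hadjPQ hadj hadjPQ'
      linear_combination htr + h2 (Φ P) - h2 (ε s(Q, Q'))
    · -- Q contains e, Q' doesn't
      rw [dif_pos ⟨hQe, hQm⟩, dif_neg (fun h => hQ'e h.1)]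
      have hQ'lt := hlt Q' hQ'm hQ'e
      have hsub : Q.1.erase e ⊆ Q'.1 := by
        have h1 : Q.1 ∩ Q'.1 ⊆ Q.1.erase e := by
          intro z hz
          have hzm := Finset.mem_inter.mp hz
          exact Finset.mem_erase.mpr ⟨fun h => hQ'e (h ▸ hzm.2), hzm.1⟩
        have h2' : Q.1 ∩ Q'.1 = Q.1.erase e :=
          Finset.eq_of_subset_of_card_le h1
            (by rw [Finset.card_erase_of_mem hQe, Q.2, hcard4])
        rw [← h2']; exact Finset.inter_subset_right
      have heq := huniq Q (nb Q hQe hQm) Q' hQe (hnb1 _ _ _) hQ'lt (hnb2 _ _ _) hsub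
      rw [heq, show s(Q', Q) = s(Q, Q') from Sym2.eq_swap]
      linear_combination h2 (Φ Q')
    · -- Q' contains e, Q doesn't
      rw [dif_neg (fun h => hQe h.1), dif_pos ⟨hQ'e, hQ'm⟩]
      have hQlt := hlt Q hQm hQe
      have hcard4' : (Q'.1 ∩ Q.1).card = 4 := by rw [Finset.inter_comm]; exact hcard4
      have hsub : Q'.1.erase e ⊆ Q.1 := by
        have h1 : Q'.1 ∩ Q.1 ⊆ Q'.1.erase e := by
          intro z hz
          have hzm := Finset.mem_inter.mp hz
          exact Finset.mem_erase.mpr ⟨fun h => hQe (h ▸ hzm.2), hzm.1⟩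
        have h2' : Q'.1 ∩ Q.1 = Q'.1.erase e :=
          Finset.eq_of_subset_of_card_le h1
            (by rw [Finset.card_erase_of_mem hQ'e, Q'.2, hcard4'])
        rw [← h2']; exact Finset.inter_subset_right
      have heq := huniq Q' (nb Q' hQ'e hQ'm) Q hQ'e (hnb1 _ _ _) hQlt (hnb2 _ _ _) hsub
      rw [heq]
      linear_combination h2 (Φ Q)
    · rw [dif_neg (fun h => hQe h.1), dif_neg (fun h => hQ'e h.1)]
      exact hΦ Q Q' (hlt Q hQm hQe) (hlt Q' hQ'm hQ'e) hadj

/-- Orientability lemma: if `ε` (sums to zero on every triangle of `𝒢ₙ` whose three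
vertices have a common intersection of size 4, and) admits no global "potential" `Φ`
with `Φ Q + Φ Q' = ε {Q,Q'}` on all edges, then some 6-element subset `S` of `Fin n`
already admits no such potential on the 5-subsets of `S`. -/
theorem stmt2 (n : ℕ)
    (ε : Sym2 {Q : Finset (Fin n) // Q.card = 5} → ZMod 2)
    (htri : ∀ Q₁ Q₂ Q₃, (ATGraph n).Adj Q₁ Q₂ → (ATGraph n).Adj Q₂ Q₃ →
      (ATGraph n).Adj Q₁ Q₃ → (Q₁.1 ∩ Q₂.1 ∩ Q₃.1).card = 4 →
      ε s(Q₁, Q₂) + ε s(Q₂, Q₃) + ε s(Q₁, Q₃) = 0)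
    (hglob : ¬ ∃ Φ : {Q : Finset (Fin n) // Q.card = 5} → ZMod 2,
      ∀ Q Q', (ATGraph n).Adj Q Q' → Φ Q + Φ Q' = ε s(Q, Q')) :
    ∃ S : Finset (Fin n), S.card = 6 ∧
      ¬ ∃ Φ : {Q : Finset (Fin n) // Q.card = 5} → ZMod 2,
        ∀ Q Q', Q.1 ⊆ S → Q'.1 ⊆ S → (ATGraph n).Adj Q Q' →
          Φ Q + Φ Q' = ε s(Q, Q') := by
  classical
  have h2 : ∀ a : ZMod 2, a + a = 0 := by decide
  by_cases hA : ∀ Q₁ Q₂ Q₃ : {Q : Finset (Fin n) // Q.card = 5},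
      (ATGraph n).Adj Q₁ Q₂ → (ATGraph n).Adj Q₂ Q₃ → (ATGraph n).Adj Q₁ Q₃ →
      ε s(Q₁, Q₂) + ε s(Q₂, Q₃) + ε s(Q₁, Q₃) = 0
  · obtain ⟨Φ, hΦ⟩ := at_key n ε hA n
    exact absurd ⟨Φ, fun Q Q' h => hΦ Q Q' (fun i _ => i.isLt) (fun i _ => i.isLt) h⟩ hglob
  · push_neg at hA
    obtain ⟨Q₁, Q₂, Q₃, h12, h23, h13, hne⟩ := hA
    have hc12 : (Q₁.1 ∩ Q₂.1).card = 4 := h12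
    have hc23 : (Q₂.1 ∩ Q₃.1).card = 4 := h23
    have hc13 : (Q₁.1 ∩ Q₃.1).card = 4 := h13
    -- the triple intersection has size 3
    have htup : (Q₁.1 ∩ Q₂.1 ∩ Q₃.1).card ≤ 4 :=
      hc12 ▸ Finset.card_le_card Finset.inter_subset_left
    have htne : (Q₁.1 ∩ Q₂.1 ∩ Q₃.1).card ≠ 4 := fun h =>
      hne (htri Q₁ Q₂ Q₃ h12 h23 h13 h)
    have htlow : 3 ≤ (Q₁.1 ∩ Q₂.1 ∩ Q₃.1).card := by
      have hIE := Finset.card_union_add_card_inter (Q₁.1 ∩ Q₂.1) (Q₁.1 ∩ Q₃.1)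
      have hieq : (Q₁.1 ∩ Q₂.1) ∩ (Q₁.1 ∩ Q₃.1) = Q₁.1 ∩ Q₂.1 ∩ Q₃.1 := by
        ext z; simp only [Finset.mem_inter]; tauto
      have hsub : (Q₁.1 ∩ Q₂.1) ∪ (Q₁.1 ∩ Q₃.1) ⊆ Q₁.1 := by
        intro z hz
        rcases Finset.mem_union.mp hz with h | h
        exacts [(Finset.mem_inter.mp h).1, (Finset.mem_inter.mp h).1]
      have h5 := Finset.card_le_card hsub
      rw [hieq, hc12, hc13] at hIE
      rw [Q₁.2] at h5
      omega
    have ht3 : (Q₁.1 ∩ Q₂.1 ∩ Q₃.1).card = 3 := by omega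
    refine ⟨Q₁.1 ∪ Q₂.1 ∪ Q₃.1, ?_, ?_⟩
    · have hU2 : (Q₁.1 ∪ Q₂.1).card = 6 := by
        have := Finset.card_union_add_card_inter Q₁.1 Q₂.1
        rw [Q₁.2, Q₂.2, hc12] at this; omega
      have hdist : (Q₁.1 ∪ Q₂.1) ∩ Q₃.1 = (Q₁.1 ∩ Q₃.1) ∪ (Q₂.1 ∩ Q₃.1) :=
        Finset.union_inter_distrib_right _ _ _
      have hieq2 : (Q₁.1 ∩ Q₃.1) ∩ (Q₂.1 ∩ Q₃.1) = Q₁.1 ∩ Q₂.1 ∩ Q₃.1 := by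
        ext z; simp only [Finset.mem_inter]; tauto
      have hmid := Finset.card_union_add_card_inter (Q₁.1 ∩ Q₃.1) (Q₂.1 ∩ Q₃.1)
      rw [hieq2, hc13, hc23, ht3] at hmid
      have hfin := Finset.card_union_add_card_inter (Q₁.1 ∪ Q₂.1) Q₃.1
      rw [hU2, Q₃.2, hdist] at hfin
      omega
    · rintro ⟨Φ, hΦ⟩
      have hs1 : Q₁.1 ⊆ Q₁.1 ∪ Q₂.1 ∪ Q₃.1 :=
        Finset.subset_union_left.trans Finset.subset_union_left
      have hs2 : Q₂.1 ⊆ Q₁.1 ∪ Q₂.1 ∪ Q₃.1 :=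
        Finset.subset_union_right.trans Finset.subset_union_left
      have hs3 : Q₃.1 ⊆ Q₁.1 ∪ Q₂.1 ∪ Q₃.1 := Finset.subset_union_right
      have e12 := hΦ Q₁ Q₂ hs1 hs2 h12
      have e23 := hΦ Q₂ Q₃ hs2 hs3 h23
      have e13 := hΦ Q₁ Q₃ hs1 hs3 h13
      exact hne (by linear_combination h2 (Φ Q₁) + h2 (Φ Q₂) + h2 (Φ Q₃) - e12 - e23 - e13)
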